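/- For each integer k with 0 ≤ k ≤ 6, the spectral radius of the (3+k)×(3+k) integer matrix F_{k,0,0} equals (9−k) + √((9−k)² − 1); that is, (9−k) + √((9−k)² − 1) is a root of the characteristic polynomial of F_{k,0,0}, and every complex root of the characteristic polynomial has modulus at most (9−k) + √((9−k)² − 1). (In particular this value is the larger root of t² − 2(9−k)t + 1 = 0.) -/

import Mathlib

open Matrix

/-- Axis (0 = x, 1 = y, 2 = z) of a basis index `t ≥ 3` (curve classes):
indices `3,…,2+k` are `C_{x,i}`, indices `3+k,…,2+k+l` are `C_{y,i}`,
and the remaining indices are `C_{z,i}`. -/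
def axOf (k l : ℕ) (t : ℕ) : ℕ :=
  if t < 3 + k then 0 else if t < 3 + k + l then 1 else 2

/-- The matrix of `T_x` in the basis
`E_x, E_y, E_z, C_{x,1},…,C_{x,k}, C_{y,1},…,C_{y,l}, C_{z,1},…,C_{z,m}`:
`T_x` fixes `E_y`, `E_z` and each `C_{x,i}`, sends `C_{y,i} ↦ E_z − C_{y,i}`,
`C_{z,i} ↦ E_y − C_{z,i}`, and `E_x ↦ −E_x + 2E_y + 2E_z − (C_{x,1}+…+C_{x,k})`. -/
def Tx (k l m : ℕ) : Matrix (Fin (3 + k + l + m)) (Fin (3 + k + l + m)) ℤ :=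
  fun i j =>
    if (j : ℕ) = 0 then
      if (i : ℕ) = 0 then -1
      else if (i : ℕ) < 3 then 2
      else if axOf k l i = 0 then -1 else 0
    else if (j : ℕ) < 3 then (if i = j then 1 else 0)
    else if axOf k l j = 0 then (if i = j then 1 else 0)
    else if axOf k l j = 1 then (if (i : ℕ) = 2 then 1 else if i = j then -1 else 0)
    else (if (i : ℕ) = 1 then 1 else if i = j then -1 else 0)

/-- The matrix of `T_y`: it fixes `E_x`, `E_z` and each `C_{y,i}`, sends
`C_{x,i} ↦ E_z − C_{x,i}`, `C_{z,i} ↦ E_x − C_{z,i}`, and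
`E_y ↦ 2E_x − E_y + 2E_z − (C_{y,1}+…+C_{y,l})`. -/
def Ty (k l m : ℕ) : Matrix (Fin (3 + k + l + m)) (Fin (3 + k + l + m)) ℤ :=
  fun i j =>
    if (j : ℕ) = 1 then
      if (i : ℕ) = 1 then -1
      else if (i : ℕ) < 3 then 2
      else if axOf k l i = 1 then -1 else 0
    else if (j : ℕ) < 3 then (if i = j then 1 else 0)
    else if axOf k l j = 1 then (if i = j then 1 else 0)
    else if axOf k l j = 0 then (if (i : ℕ) = 2 then 1 else if i = j then -1 else 0)
    else (if (i : ℕ) = 0 then 1 else if i = j then -1 else 0)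

/-- The matrix of `T_z`: it fixes `E_x`, `E_y` and each `C_{z,i}`, sends
`C_{x,i} ↦ E_y − C_{x,i}`, `C_{y,i} ↦ E_x − C_{y,i}`, and
`E_z ↦ 2E_x + 2E_y − E_z − (C_{z,1}+…+C_{z,m})`. -/
def Tz (k l m : ℕ) : Matrix (Fin (3 + k + l + m)) (Fin (3 + k + l + m)) ℤ :=
  fun i j =>
    if (j : ℕ) = 2 then
      if (i : ℕ) = 2 then -1
      else if (i : ℕ) < 3 then 2
      else if axOf k l i = 2 then -1 else 0
    else if (j : ℕ) < 3 then (if i = j then 1 else 0)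
    else if axOf k l j = 2 then (if i = j then 1 else 0)
    else if axOf k l j = 0 then (if (i : ℕ) = 1 then 1 else if i = j then -1 else 0)
    else (if (i : ℕ) = 0 then 1 else if i = j then -1 else 0)

/-- The matrix of `F = T_z ∘ T_y ∘ T_x`. -/
def Fm (k l m : ℕ) : Matrix (Fin (3 + k + l + m)) (Fin (3 + k + l + m)) ℤ :=
  Tz k l m * Ty k l m * Tx k l m

/-- The characteristic polynomial (over `ℂ`) of the integer matrix `F_{k,l,m}`. -/
noncomputable def cpF (k l m : ℕ) : Polynomial ℂ :=
  Matrix.charpoly ((Fm k l m).map (fun x => (x : ℂ)))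

open Polynomial

section consval
variable {α : Type*} {m : ℕ}
lemma cons_val_five (x : α) (u : Fin (m+5) → α) :
    Matrix.vecCons x u 5 = Matrix.vecHead (Matrix.vecTail (Matrix.vecTail (Matrix.vecTail (Matrix.vecTail u)))) := rfl
lemma cons_val_six (x : α) (u : Fin (m+6) → α) :
    Matrix.vecCons x u 6 = Matrix.vecHead (Matrix.vecTail (Matrix.vecTail (Matrix.vecTail (Matrix.vecTail (Matrix.vecTail u))))) := rfl
lemma cons_val_seven (x : α) (u : Fin (m+7) → α) :
    Matrix.vecCons x u 7 = Matrix.vecHead (Matrix.vecTail (Matrix.vecTail (Matrix.vecTail (Matrix.vecTail (Matrix.vecTail (Matrix.vecTail u)))))) := rfl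
lemma cons_val_eight (x : α) (u : Fin (m+8) → α) :
    Matrix.vecCons x u 8 = Matrix.vecHead (Matrix.vecTail (Matrix.vecTail (Matrix.vecTail (Matrix.vecTail (Matrix.vecTail (Matrix.vecTail (Matrix.vecTail u))))))) := rfl
end consval

lemma eval_charpoly_eq {n : ℕ} (M : Matrix (Fin n) (Fin n) ℂ) (μ : ℂ) :
    (Matrix.charpoly M).eval μ = (μ • (1 : Matrix (Fin n) (Fin n) ℂ) - M).det := by
  rw [Matrix.charpoly, ← Polynomial.coe_evalRingHom, RingHom.map_det]
  congr 1
  ext i j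
  by_cases h : i = j <;>
    simp [h, Matrix.charmatrix_apply_eq, Matrix.charmatrix_apply_ne, Matrix.one_apply]

lemma isRoot_charpoly_iff {n : ℕ} (M : Matrix (Fin n) (Fin n) ℂ) (μ : ℂ) :
    (Matrix.charpoly M).IsRoot μ ↔ ∃ v : Fin n → ℂ, v ≠ 0 ∧ M.mulVec v = μ • v := by
  rw [Polynomial.IsRoot, eval_charpoly_eq, ← Matrix.exists_mulVec_eq_zero_iff]
  constructor
  · rintro ⟨v, hv, h⟩
    refine ⟨v, hv, ?_⟩
    rw [Matrix.sub_mulVec, Matrix.smul_mulVec, Matrix.one_mulVec, sub_eq_zero] at h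
    exact h.symm
  · rintro ⟨v, hv, h⟩
    refine ⟨v, hv, ?_⟩
    rw [Matrix.sub_mulVec, Matrix.smul_mulVec, Matrix.one_mulVec, h, sub_self]

lemma pow_mulVec_eigen {n : ℕ} {M : Matrix (Fin n) (Fin n) ℂ} {μ : ℂ} {v : Fin n → ℂ}
    (h : M.mulVec v = μ • v) (p : ℕ) : (M ^ p).mulVec v = (μ ^ p) • v := by
  induction p with
  | zero => simp [Matrix.one_mulVec]
  | succ p ih =>
      rw [pow_succ, ← Matrix.mulVec_mulVec, h, Matrix.mulVec_smul, ih, smul_smul, ← pow_succ']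

lemma quartic_of_eigen {n : ℕ} {M : Matrix (Fin n) (Fin n) ℂ} {s μ : ℂ} {v : Fin n → ℂ}
    (hv : v ≠ 0) (h : M.mulVec v = μ • v)
    (hann : M ^ 4 + s • M = s • M ^ 3 + 1) :
    μ ^ 4 + s * μ = s * μ ^ 3 + 1 := by
  obtain ⟨i, hi⟩ := Function.ne_iff.mp hv
  have hi' : v i ≠ 0 := by simpa using hi
  have h0 := congrArg (fun A => Matrix.mulVec A v i) hann
  simp only [Matrix.add_mulVec, Matrix.smul_mulVec, Matrix.one_mulVec,
    pow_mulVec_eigen h, h, Pi.add_apply, Pi.smul_apply, smul_eq_mul] at h0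
  have key : (μ ^ 4 + s * μ) * v i = (s * μ ^ 3 + 1) * v i := by linear_combination h0
  exact mul_right_cancel₀ hi' key

lemma abs_root_le {n : ℕ} (A : Matrix (Fin n) (Fin n) ℤ) (s : ℤ) (c : ℝ)
    (hc : 3 ≤ c) (hsc : (s : ℝ) = 2 * c)
    (hann : A ^ 4 + s • A = s • A ^ 3 + 1) (z : ℂ)
    (hz : (Matrix.charpoly (A.map (fun x => (x:ℂ)))).IsRoot z) :
    ‖z‖ ≤ c + Real.sqrt (c ^ 2 - 1) := by
  set M : Matrix (Fin n) (Fin n) ℂ := A.map (fun x => (x:ℂ)) with hM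
  have hφ : M = (Int.castRingHom ℂ).mapMatrix A := rfl
  have hannC : M ^ 4 + (s:ℂ) • M = (s:ℂ) • M ^ 3 + 1 := by
    have := congrArg ((Int.castRingHom ℂ).mapMatrix) hann
    simp only [map_add, map_pow, map_zsmul, _root_.map_one] at this
    rw [hφ, Int.cast_smul_eq_zsmul, Int.cast_smul_eq_zsmul]
    exact this
  obtain ⟨v, hv, hMv⟩ := (isRoot_charpoly_iff M z).mp hz
  have hq := quartic_of_eigen hv hMv hannC
  have hscC : ((s:ℤ):ℂ) = 2 * (c:ℂ) := by
    rw [show ((s:ℤ):ℂ) = (((s:ℤ):ℝ):ℂ) by push_cast; ring, hsc]; push_cast; ring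
  have hfac : (z - 1) * (z + 1) * (z ^ 2 - 2 * (c:ℂ) * z + 1) = 0 := by
    linear_combination hq + (z ^ 3 - z) * hscC
  set q := Real.sqrt (c ^ 2 - 1) with hqdef
  have hq0 : 0 ≤ q := Real.sqrt_nonneg _
  have hq2 : q ^ 2 = c ^ 2 - 1 := Real.sq_sqrt (by nlinarith)
  have hqc : q ≤ c := by nlinarith
  have hfac2 : (z - 1) * (z + 1) * ((z - ((c:ℂ) + (q:ℂ))) * (z - ((c:ℂ) - (q:ℂ)))) = 0 := by
    have hq2C : (q:ℂ) ^ 2 = (c:ℂ) ^ 2 - 1 := by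
      exact_mod_cast congrArg Complex.ofReal hq2
    linear_combination hfac - (z - 1) * (z + 1) * hq2C
  have habs : z = 1 ∨ z = -1 ∨ z = ((c:ℂ) + (q:ℂ)) ∨ z = ((c:ℂ) - (q:ℂ)) := by
    rcases mul_eq_zero.mp hfac2 with h | h
    · rcases mul_eq_zero.mp h with h | h
      · exact Or.inl (by linear_combination h)
      · exact Or.inr (Or.inl (by linear_combination h))
    · rcases mul_eq_zero.mp h with h | h
      · exact Or.inr (Or.inr (Or.inl (by linear_combination h)))
      · exact Or.inr (Or.inr (Or.inr (by linear_combination h)))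
  rcases habs with h | h | h | h <;> subst h
  · simp; nlinarith
  · simp; nlinarith
  · rw [show ((c:ℂ) + (q:ℂ)) = (((c + q : ℝ)) : ℂ) by push_cast; ring, Complex.norm_real, Real.norm_eq_abs]
    rw [abs_of_nonneg (by linarith)]
  · rw [show ((c:ℂ) - (q:ℂ)) = (((c - q : ℝ)) : ℂ) by push_cast; ring, Complex.norm_real, Real.norm_eq_abs]
    rw [abs_of_nonneg (by linarith)]; linarith

set_option maxHeartbeats 3200000 in

/-- For `0 ≤ k ≤ 6`, the spectral radius of `F_{k,0,0}` is
`(9−k) + √((9−k)² − 1)`: this value is a root of the characteristic polynomial of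
`F_{k,0,0}` and every complex root has modulus at most this value. -/


theorem specRad_Fk00 (k : ℕ) (hk : k ≤ 6) :
    (cpF k 0 0).IsRoot
      (((9 - (k : ℝ)) + Real.sqrt ((9 - (k : ℝ)) ^ 2 - 1) : ℝ) : ℂ) ∧
    ∀ z : ℂ, (cpF k 0 0).IsRoot z →
      ‖z‖ ≤ (9 - (k : ℝ)) + Real.sqrt ((9 - (k : ℝ)) ^ 2 - 1) := by
  interval_cases k
  · -- k = 0
    have hFm : Fm 0 0 0 = !![15,6,2; 10,3,2; -6,-2,-1] := by decide
    constructor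
    · have hsq : Real.sqrt 80 ^ 2 = 80 := Real.sq_sqrt (by norm_num)
      set ρ : ℝ := (9 - ((0:ℕ) : ℝ)) + Real.sqrt ((9 - ((0:ℕ) : ℝ)) ^ 2 - 1) with hρ
      have hρ2 : ρ ^ 2 = 18 * ρ - 1 := by
        rw [hρ]; norm_num; nlinarith [hsq, Real.sqrt_nonneg (80:ℝ)]
      set r : ℂ := (ρ : ℂ) with hr
      have hrr : r ^ 2 = 18 * r - 1 := by
        rw [hr]; exact_mod_cast congrArg Complex.ofReal hρ2
      rw [cpF, isRoot_charpoly_iff]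
      refine ⟨![-3-r, 5-r, 8], ?_, ?_⟩
      · intro h
        have := congrFun h 2
        simp at this
      · funext i
        rw [hFm]
        fin_cases i <;>
          simp [Matrix.mulVec, dotProduct, Fin.sum_univ_succ, Matrix.map_apply,
            cons_val_five, cons_val_six, cons_val_seven, cons_val_eight] <;>
          first
            | linear_combination (2:ℂ) * hrr
            | linear_combination hrr
            | linear_combination -hrr
            | linear_combination (-2:ℂ) * hrr
            | ring
    · intro z hz
      rw [cpF] at hz
      have hann : Fm 0 0 0 ^ 4 + (18:ℤ) • Fm 0 0 0 = (18:ℤ) • Fm 0 0 0 ^ 3 + 1 := by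
        decide
      exact abs_root_le (Fm 0 0 0) 18 (9 - ((0:ℕ) : ℝ)) (by norm_num) (by norm_num) hann z hz
  · -- k = 1
    have hFm : Fm 1 0 0 = !![13,6,2,2; 9,3,2,1; -5,-2,-1,-1; -1,0,0,1] := by decide
    constructor
    · have hsq : Real.sqrt 63 ^ 2 = 63 := Real.sq_sqrt (by norm_num)
      set ρ : ℝ := (9 - ((1:ℕ) : ℝ)) + Real.sqrt ((9 - ((1:ℕ) : ℝ)) ^ 2 - 1) with hρ
      have hρ2 : ρ ^ 2 = 16 * ρ - 1 := by
        rw [hρ]; norm_num; nlinarith [hsq, Real.sqrt_nonneg (63:ℝ)]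
      set r : ℂ := (ρ : ℂ) with hr
      have hrr : r ^ 2 = 16 * r - 1 := by
        rw [hr]; exact_mod_cast congrArg Complex.ofReal hρ2
      rw [cpF, isRoot_charpoly_iff]
      refine ⟨![2-2*r, -3-r, -5+r, 2], ?_, ?_⟩
      · intro h
        have := congrFun h 3
        simp at this
      · funext i
        rw [hFm]
        fin_cases i <;>
          simp [Matrix.mulVec, dotProduct, Fin.sum_univ_succ, Matrix.map_apply,
            cons_val_five, cons_val_six, cons_val_seven, cons_val_eight] <;>
          first
            | linear_combination (2:ℂ) * hrr
            | linear_combination hrr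
            | linear_combination -hrr
            | linear_combination (-2:ℂ) * hrr
            | ring
    · intro z hz
      rw [cpF] at hz
      have hann : Fm 1 0 0 ^ 4 + (16:ℤ) • Fm 1 0 0 = (16:ℤ) • Fm 1 0 0 ^ 3 + 1 := by
        decide
      exact abs_root_le (Fm 1 0 0) 16 (9 - ((1:ℕ) : ℝ)) (by norm_num) (by norm_num) hann z hz
  · -- k = 2
    have hFm : Fm 2 0 0 = !![11,6,2,2,2; 8,3,2,1,1; -4,-2,-1,-1,-1; -1,0,0,1,0; -1,0,0,0,1] := by decide
    constructor
    · have hsq : Real.sqrt 48 ^ 2 = 48 := Real.sq_sqrt (by norm_num)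
      set ρ : ℝ := (9 - ((2:ℕ) : ℝ)) + Real.sqrt ((9 - ((2:ℕ) : ℝ)) ^ 2 - 1) with hρ
      have hρ2 : ρ ^ 2 = 14 * ρ - 1 := by
        rw [hρ]; norm_num; nlinarith [hsq, Real.sqrt_nonneg (48:ℝ)]
      set r : ℂ := (ρ : ℂ) with hr
      have hrr : r ^ 2 = 14 * r - 1 := by
        rw [hr]; exact_mod_cast congrArg Complex.ofReal hρ2
      rw [cpF, isRoot_charpoly_iff]
      refine ⟨![2-2*r, -3-r, -5+r, 2, 2], ?_, ?_⟩
      · intro h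
        have := congrFun h 3
        simp at this
      · funext i
        rw [hFm]
        fin_cases i <;>
          simp [Matrix.mulVec, dotProduct, Fin.sum_univ_succ, Matrix.map_apply,
            cons_val_five, cons_val_six, cons_val_seven, cons_val_eight] <;>
          first
            | linear_combination (2:ℂ) * hrr
            | linear_combination hrr
            | linear_combination -hrr
            | linear_combination (-2:ℂ) * hrr
            | ring
    · intro z hz
      rw [cpF] at hz
      have hann : Fm 2 0 0 ^ 4 + (14:ℤ) • Fm 2 0 0 = (14:ℤ) • Fm 2 0 0 ^ 3 + 1 := by
        decide
      exact abs_root_le (Fm 2 0 0) 14 (9 - ((2:ℕ) : ℝ)) (by norm_num) (by norm_num) hann z hz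
  · -- k = 3
    have hFm : Fm 3 0 0 = !![9,6,2,2,2,2; 7,3,2,1,1,1; -3,-2,-1,-1,-1,-1; -1,0,0,1,0,0; -1,0,0,0,1,0; -1,0,0,0,0,1] := by decide
    constructor
    · have hsq : Real.sqrt 35 ^ 2 = 35 := Real.sq_sqrt (by norm_num)
      set ρ : ℝ := (9 - ((3:ℕ) : ℝ)) + Real.sqrt ((9 - ((3:ℕ) : ℝ)) ^ 2 - 1) with hρ
      have hρ2 : ρ ^ 2 = 12 * ρ - 1 := by
        rw [hρ]; norm_num; nlinarith [hsq, Real.sqrt_nonneg (35:ℝ)]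
      set r : ℂ := (ρ : ℂ) with hr
      have hrr : r ^ 2 = 12 * r - 1 := by
        rw [hr]; exact_mod_cast congrArg Complex.ofReal hρ2
      rw [cpF, isRoot_charpoly_iff]
      refine ⟨![2-2*r, -3-r, -5+r, 2, 2, 2], ?_, ?_⟩
      · intro h
        have := congrFun h 3
        simp at this
      · funext i
        rw [hFm]
        fin_cases i <;>
          simp [Matrix.mulVec, dotProduct, Fin.sum_univ_succ, Matrix.map_apply,
            cons_val_five, cons_val_six, cons_val_seven, cons_val_eight] <;>
          first
            | linear_combination (2:ℂ) * hrr
            | linear_combination hrr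
            | linear_combination -hrr
            | linear_combination (-2:ℂ) * hrr
            | ring
    · intro z hz
      rw [cpF] at hz
      have hann : Fm 3 0 0 ^ 4 + (12:ℤ) • Fm 3 0 0 = (12:ℤ) • Fm 3 0 0 ^ 3 + 1 := by
        decide
      exact abs_root_le (Fm 3 0 0) 12 (9 - ((3:ℕ) : ℝ)) (by norm_num) (by norm_num) hann z hz
  · -- k = 4
    have hFm : Fm 4 0 0 = !![7,6,2,2,2,2,2; 6,3,2,1,1,1,1; -2,-2,-1,-1,-1,-1,-1; -1,0,0,1,0,0,0; -1,0,0,0,1,0,0; -1,0,0,0,0,1,0; -1,0,0,0,0,0,1] := by decide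
    constructor
    · have hsq : Real.sqrt 24 ^ 2 = 24 := Real.sq_sqrt (by norm_num)
      set ρ : ℝ := (9 - ((4:ℕ) : ℝ)) + Real.sqrt ((9 - ((4:ℕ) : ℝ)) ^ 2 - 1) with hρ
      have hρ2 : ρ ^ 2 = 10 * ρ - 1 := by
        rw [hρ]; norm_num; nlinarith [hsq, Real.sqrt_nonneg (24:ℝ)]
      set r : ℂ := (ρ : ℂ) with hr
      have hrr : r ^ 2 = 10 * r - 1 := by
        rw [hr]; exact_mod_cast congrArg Complex.ofReal hρ2
      rw [cpF, isRoot_charpoly_iff]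
      refine ⟨![2-2*r, -3-r, -5+r, 2, 2, 2, 2], ?_, ?_⟩
      · intro h
        have := congrFun h 3
        simp at this
      · funext i
        rw [hFm]
        fin_cases i <;>
          simp [Matrix.mulVec, dotProduct, Fin.sum_univ_succ, Matrix.map_apply,
            cons_val_five, cons_val_six, cons_val_seven, cons_val_eight] <;>
          first
            | linear_combination (2:ℂ) * hrr
            | linear_combination hrr
            | linear_combination -hrr
            | linear_combination (-2:ℂ) * hrr
            | ring
    · intro z hz
      rw [cpF] at hz
      have hann : Fm 4 0 0 ^ 4 + (10:ℤ) • Fm 4 0 0 = (10:ℤ) • Fm 4 0 0 ^ 3 + 1 := by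
        decide
      exact abs_root_le (Fm 4 0 0) 10 (9 - ((4:ℕ) : ℝ)) (by norm_num) (by norm_num) hann z hz
  · -- k = 5
    have hFm : Fm 5 0 0 = !![5,6,2,2,2,2,2,2; 5,3,2,1,1,1,1,1; -1,-2,-1,-1,-1,-1,-1,-1; -1,0,0,1,0,0,0,0; -1,0,0,0,1,0,0,0; -1,0,0,0,0,1,0,0; -1,0,0,0,0,0,1,0; -1,0,0,0,0,0,0,1] := by decide
    constructor
    · have hsq : Real.sqrt 15 ^ 2 = 15 := Real.sq_sqrt (by norm_num)
      set ρ : ℝ := (9 - ((5:ℕ) : ℝ)) + Real.sqrt ((9 - ((5:ℕ) : ℝ)) ^ 2 - 1) with hρ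
      have hρ2 : ρ ^ 2 = 8 * ρ - 1 := by
        rw [hρ]; norm_num; nlinarith [hsq, Real.sqrt_nonneg (15:ℝ)]
      set r : ℂ := (ρ : ℂ) with hr
      have hrr : r ^ 2 = 8 * r - 1 := by
        rw [hr]; exact_mod_cast congrArg Complex.ofReal hρ2
      rw [cpF, isRoot_charpoly_iff]
      refine ⟨![2-2*r, -3-r, -5+r, 2, 2, 2, 2, 2], ?_, ?_⟩
      · intro h
        have := congrFun h 3
        simp at this
      · funext i
        rw [hFm]
        fin_cases i <;>
          simp [Matrix.mulVec, dotProduct, Fin.sum_univ_succ, Matrix.map_apply,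
            cons_val_five, cons_val_six, cons_val_seven, cons_val_eight] <;>
          first
            | linear_combination (2:ℂ) * hrr
            | linear_combination hrr
            | linear_combination -hrr
            | linear_combination (-2:ℂ) * hrr
            | ring
    · intro z hz
      rw [cpF] at hz
      have hann : Fm 5 0 0 ^ 4 + (8:ℤ) • Fm 5 0 0 = (8:ℤ) • Fm 5 0 0 ^ 3 + 1 := by
        decide
      exact abs_root_le (Fm 5 0 0) 8 (9 - ((5:ℕ) : ℝ)) (by norm_num) (by norm_num) hann z hz
  · -- k = 6
    have hFm : Fm 6 0 0 = !![3,6,2,2,2,2,2,2,2; 4,3,2,1,1,1,1,1,1; 0,-2,-1,-1,-1,-1,-1,-1,-1; -1,0,0,1,0,0,0,0,0; -1,0,0,0,1,0,0,0,0; -1,0,0,0,0,1,0,0,0; -1,0,0,0,0,0,1,0,0; -1,0,0,0,0,0,0,1,0; -1,0,0,0,0,0,0,0,1] := by decide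
    constructor
    · have hsq : Real.sqrt 8 ^ 2 = 8 := Real.sq_sqrt (by norm_num)
      set ρ : ℝ := (9 - ((6:ℕ) : ℝ)) + Real.sqrt ((9 - ((6:ℕ) : ℝ)) ^ 2 - 1) with hρ
      have hρ2 : ρ ^ 2 = 6 * ρ - 1 := by
        rw [hρ]; norm_num; nlinarith [hsq, Real.sqrt_nonneg (8:ℝ)]
      set r : ℂ := (ρ : ℂ) with hr
      have hrr : r ^ 2 = 6 * r - 1 := by
        rw [hr]; exact_mod_cast congrArg Complex.ofReal hρ2
      rw [cpF, isRoot_charpoly_iff]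
      refine ⟨![2-2*r, -3-r, -5+r, 2, 2, 2, 2, 2, 2], ?_, ?_⟩
      · intro h
        have := congrFun h 3
        simp at this
      · funext i
        rw [hFm]
        fin_cases i <;>
          simp [Matrix.mulVec, dotProduct, Fin.sum_univ_succ, Matrix.map_apply,
            cons_val_five, cons_val_six, cons_val_seven, cons_val_eight] <;>
          first
            | linear_combination (2:ℂ) * hrr
            | linear_combination hrr
            | linear_combination -hrr
            | linear_combination (-2:ℂ) * hrr
            | ring
    · intro z hz
      rw [cpF] at hz
      have hann : Fm 6 0 0 ^ 4 + (6:ℤ) • Fm 6 0 0 = (6:ℤ) • Fm 6 0 0 ^ 3 + 1 := by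
        decide
      exact abs_root_le (Fm 6 0 0) 6 (9 - ((6:ℕ) : ℝ)) (by norm_num) (by norm_num) hann z hz
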